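/- arXiv:2302.11896 — 3 statements merged into one kernel-verified Lean document; each statement's English description precedes it below -/
import Mathlib

section
/- (Properties of the rate function I_∞) One has I_∞ = max(0, Ĩ_∞) pointwise on ℝ^d × ℝ^d; both I_∞ and Ĩ_∞ are lower semicontinuous; I_∞ ≥ 0 everywhere; and I_∞ = 0 on Γ_∞. -/
open MeasureTheory ENNReal Filter
open scoped Classical

noncomputable section

/-- ℝ^d with its Euclidean structure. -/
abbrev Rd (d : ℕ) := EuclideanSpace ℝ (Fin d)

/-- γ ∈ Π(μ,ν): γ has first marginal μ and second marginal ν. -/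
def IsCoupling {E F : Type*} [MeasurableSpace E] [MeasurableSpace F]
    (γ : Measure (E × F)) (μ : Measure E) (ν : Measure F) : Prop :=
  γ.map Prod.fst = μ ∧ γ.map Prod.snd = ν

/-- Relative entropy H(γ|ρ) = ∫ log(dγ/dρ) dγ if γ ≪ ρ (and the integral exists), +∞ otherwise. -/
def relEntropy {E : Type*} [MeasurableSpace E] (γ ρ : Measure E) : ℝ≥0∞ :=
  if γ ≪ ρ ∧ Integrable (llr γ ρ) γ then ENNReal.ofReal (∫ z, llr γ ρ z ∂γ) else ∞

/-- The entropic functional J_{p,ε}(γ) = (∫ c^p dγ + ε H(γ|μ⊗ν))^{1/p} on Π(μ,ν), +∞ outside. -/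
def Jpe {d : ℕ} (c : Rd d × Rd d → ℝ) (μ ν : Measure (Rd d)) (p ε : ℝ)
    (γ : Measure (Rd d × Rd d)) : ℝ≥0∞ :=
  if IsCoupling γ μ ν then
    (∫⁻ z, ENNReal.ofReal (c z ^ p) ∂γ + ENNReal.ofReal ε * relEntropy γ (μ.prod ν)) ^ (1 / p)
  else ∞

/-- The supremal functional J_∞(γ) = γ-ess sup c on Π(μ,ν), +∞ outside. -/
def Jinf {d : ℕ} (c : Rd d × Rd d → ℝ) (μ ν : Measure (Rd d))
    (γ : Measure (Rd d × Rd d)) : ℝ≥0∞ :=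
  if IsCoupling γ μ ν then essSup (fun z => ENNReal.ofReal (c z)) γ else ∞

/-- Weak-star convergence of a family of (probability) measures, as the real parameter p → ∞. -/
def WeakStarTendsto {E : Type*} [MeasurableSpace E] [TopologicalSpace E]
    (γ : ℝ → Measure E) (γ₀ : Measure E) : Prop :=
  ∀ f : BoundedContinuousFunction E ℝ,
    Tendsto (fun p => ∫ z, f z ∂(γ p)) atTop (nhds (∫ z, f z ∂γ₀))

/-- The support of a Borel measure: points all of whose neighborhoods have positive measure. -/
def msupport {E : Type*} [MeasurableSpace E] [TopologicalSpace E] (μ : Measure E) : Set E :=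
  {x | ∀ U ∈ nhds x, μ U ≠ 0}

/-- Γ is ∞-cyclically monotone: for all finite families (x_i,y_i)_{i} ⊂ Γ,
    max_i c(x_i,y_i) ≤ max_i c(x_i,y_{i+1}) with cyclic successor. -/
def InftyCM {d : ℕ} (c : Rd d × Rd d → ℝ) (Γ : Set (Rd d × Rd d)) : Prop :=
  ∀ (k : ℕ) (x y : Fin (k + 1) → Rd d), (∀ i, (x i, y i) ∈ Γ) →
    (Finset.univ.sup' Finset.univ_nonempty fun i => c (x i, y i)) ≤
      Finset.univ.sup' Finset.univ_nonempty fun i => c (x i, y (i + 1))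

/-- The rate function I_∞(x,y): supremum over k ≥ 2 points (the first being (x,y), the others
    in Γ) and permutations σ of max_i c(x_i,y_i) − max_i c(x_i,y_{σ(i)}). -/
def Irate {d : ℕ} (c : Rd d × Rd d → ℝ) (Γ : Set (Rd d × Rd d)) (z : Rd d × Rd d) : EReal :=
  ⨆ (k : ℕ) (f : Fin (k + 2) → Rd d × Rd d) (_ : f 0 = z) (_ : ∀ i, i ≠ 0 → f i ∈ Γ)
      (σ : Equiv.Perm (Fin (k + 2))),
    (((Finset.univ.sup' Finset.univ_nonempty fun i => c (f i)) -
        Finset.univ.sup' Finset.univ_nonempty fun i => c ((f i).1, (f (σ i)).2) : ℝ) : EReal)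

/-- The rate function Ĩ_∞(x,y): supremum over k ≥ 2 points (the first being (x,y), the others
    in Γ) of max_i c(x_i,y_i) − max_i c(x_i,y_{i+1}), with cyclic successor. -/
def ItildeRate {d : ℕ} (c : Rd d × Rd d → ℝ) (Γ : Set (Rd d × Rd d)) (z : Rd d × Rd d) :
    EReal :=
  ⨆ (k : ℕ) (f : Fin (k + 2) → Rd d × Rd d) (_ : f 0 = z) (_ : ∀ i, i ≠ 0 → f i ∈ Γ),
    (((Finset.univ.sup' Finset.univ_nonempty fun i => c (f i)) -
        Finset.univ.sup' Finset.univ_nonempty fun i => c ((f i).1, (f (i + 1)).2) : ℝ) : EReal)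


section RateAux

variable {d : ℕ} {c : Rd d × Rd d → ℝ} {Γ : Set (Rd d × Rd d)}

/-- Iterate of a map at a cyclic successor index in `Fin (k+1)`. -/
private lemma iter_add_one {α : Type*} (g : α → α) {k : ℕ} (i₀ : α)
    (hper : g^[k + 1] i₀ = i₀) (j : Fin (k + 1)) :
    g^[((j + 1 : Fin (k + 1))).val] i₀ = g (g^[j.val] i₀) := by
  rcases eq_or_ne j (Fin.last k) with h | h
  · have hv : ((j + 1 : Fin (k + 1))).val = 0 := by rw [Fin.val_add_one, if_pos h]
    have h2 := hper
    rw [Function.iterate_succ_apply'] at h2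
    rw [hv, h]
    simpa [Fin.last] using h2.symm
  · rw [Fin.val_add_one, if_neg h, Function.iterate_succ_apply']

private lemma perm_periodic {n : ℕ} (σ : Equiv.Perm (Fin (n + 1))) (i₀ : Fin (n + 1)) :
    Function.IsPeriodicPt (⇑σ) (orderOf σ) i₀ := by
  show (⇑σ)^[orderOf σ] i₀ = i₀
  rw [Equiv.Perm.iterate_eq_pow, pow_orderOf_eq_one]
  rfl

/-- If the whole `σ`-orbit of `i₀` is sent into `Γ` by `f`, then `c (f i₀)` is at most the
`σ`-mixed sup, by `∞`-cyclical monotonicity applied along the orbit. -/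
private lemma orbit_le (hΓ : InftyCM c Γ) {n : ℕ} (f : Fin (n + 1) → Rd d × Rd d)
    (σ : Equiv.Perm (Fin (n + 1))) (i₀ : Fin (n + 1))
    (horb : ∀ j : ℕ, f ((⇑σ)^[j] i₀) ∈ Γ) :
    c (f i₀) ≤ Finset.univ.sup' Finset.univ_nonempty fun i => c ((f i).1, (f (σ i)).2) := by
  have hN : 0 < orderOf σ := orderOf_pos σ
  set m := Function.minimalPeriod (⇑σ) i₀ with hm_def
  have hm : 0 < m := (perm_periodic σ i₀).minimalPeriod_pos hN
  have hper : (⇑σ)^[m] i₀ = i₀ := Function.isPeriodicPt_minimalPeriod (⇑σ) i₀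
  obtain ⟨k', hk'⟩ : ∃ k', m = k' + 1 := ⟨m - 1, by omega⟩
  rw [hk'] at hper
  have hineq := hΓ k' (fun j => (f ((⇑σ)^[j.val] i₀)).1) (fun j => (f ((⇑σ)^[j.val] i₀)).2)
    (fun j => by simpa using horb j.val)
  have h1 : c (f i₀) ≤
      Finset.univ.sup' Finset.univ_nonempty
        fun j : Fin (k' + 1) => c ((f ((⇑σ)^[j.val] i₀)).1, (f ((⇑σ)^[j.val] i₀)).2) := by
    have := Finset.le_sup' (b := (0 : Fin (k' + 1)))
      (f := fun j : Fin (k' + 1) => c ((f ((⇑σ)^[j.val] i₀)).1, (f ((⇑σ)^[j.val] i₀)).2))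
      (Finset.mem_univ _)
    simpa [-Finset.le_sup'_iff] using this
  refine h1.trans (hineq.trans (Finset.sup'_le _ _ fun j _ => ?_))
  have hj1 : (⇑σ)^[((j + 1 : Fin (k' + 1))).val] i₀ = σ ((⇑σ)^[j.val] i₀) :=
    iter_add_one (⇑σ) i₀ hper j
  rw [hj1]
  exact Finset.le_sup' (fun i => c ((f i).1, (f (σ i)).2)) (Finset.mem_univ ((⇑σ)^[j.val] i₀))

/-- Every term in the supremum defining `Irate` is bounded by `max 0 (ItildeRate … (f 0))`. -/
private lemma key (hΓ : InftyCM c Γ) (k : ℕ) (f : Fin (k + 2) → Rd d × Rd d)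
    (hf : ∀ i, i ≠ 0 → f i ∈ Γ) (σ : Equiv.Perm (Fin (k + 2))) :
    (((Finset.univ.sup' Finset.univ_nonempty fun i => c (f i)) -
        Finset.univ.sup' Finset.univ_nonempty fun i => c ((f i).1, (f (σ i)).2) : ℝ) : EReal)
      ≤ max 0 (ItildeRate c Γ (f 0)) := by
  set A := Finset.univ.sup' Finset.univ_nonempty fun i => c (f i) with hA_def
  set B := Finset.univ.sup' Finset.univ_nonempty fun i => c ((f i).1, (f (σ i)).2) with hB_def
  obtain ⟨i₀, -, hA⟩ := Finset.exists_mem_eq_sup' (Finset.univ_nonempty) fun i => c (f i)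
  by_cases hzero : ∀ j : ℕ, (⇑σ)^[j] i₀ ≠ 0
  · -- orbit of the max point avoids 0, hence lies in Γ: A ≤ B
    have hAB : A ≤ B := by
      rw [hA_def, hB_def, hA]
      exact orbit_le hΓ f σ i₀ fun j => hf _ (hzero j)
    refine le_max_of_le_left ?_
    have : ((A - B : ℝ) : EReal) ≤ ((0 : ℝ) : EReal) :=
      EReal.coe_le_coe_iff.mpr (by linarith)
    simpa using this
  · push_neg at hzero
    obtain ⟨t, ht⟩ := hzero
    have hN : 0 < orderOf σ := orderOf_pos σ
    -- i₀ lies on the orbit of 0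
    have hs0 : ∃ s : ℕ, (⇑σ)^[s] 0 = i₀ := by
      refine ⟨t * (orderOf σ - 1), ?_⟩
      rw [← ht, ← Function.iterate_add_apply]
      have hsucc : orderOf σ - 1 + 1 = orderOf σ := Nat.succ_pred_eq_of_pos hN
      have h' : t * (orderOf σ - 1) + t = orderOf σ * t := by
        calc t * (orderOf σ - 1) + t = t * (orderOf σ - 1 + 1) := by ring
          _ = orderOf σ * t := by rw [hsucc]; ring
      rw [h', Function.iterate_mul]
      exact Function.iterate_fixed (perm_periodic σ i₀) t
    obtain ⟨s, hs⟩ := hs0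
    set m := Function.minimalPeriod (⇑σ) (0 : Fin (k + 2)) with hm_def
    have hm : 0 < m := (perm_periodic σ 0).minimalPeriod_pos hN
    have hper : (⇑σ)^[m] 0 = 0 := Function.isPeriodicPt_minimalPeriod (⇑σ) 0
    have hs' : (⇑σ)^[s % m] 0 = i₀ := by
      rw [(Function.isPeriodicPt_minimalPeriod (⇑σ) (0 : Fin (k + 2))).iterate_mod_apply s, hs]
    rcases Nat.lt_or_ge m 2 with hm2 | hm2
    · -- m = 1 : σ fixes 0 and i₀ = 0
      have hm1 : m = 1 := by omega
      have hi₀ : i₀ = 0 := by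
        rw [← hs', hm1]; simp [Nat.mod_one]
      have hσ0 : σ 0 = 0 := by
        have := hper; rw [hm1] at this; simpa using this
      have hBge : c (f 0) ≤ B := by
        have := Finset.le_sup' (fun i => c ((f i).1, (f (σ i)).2))
          (Finset.mem_univ (0 : Fin (k + 2)))
        rw [hB_def]
        simpa [hσ0, -Finset.le_sup'_iff] using this
      refine le_max_of_le_left ?_
      have hA0 : A = c (f 0) := by rw [hA_def, hA, hi₀]
      have : ((A - B : ℝ) : EReal) ≤ ((0 : ℝ) : EReal) :=
        EReal.coe_le_coe_iff.mpr (by rw [hA0]; linarith)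
      simpa using this
    · -- m ≥ 2 : produce a competitor for ItildeRate at f 0
      obtain ⟨k', hk'⟩ : ∃ k', m = k' + 2 := ⟨m - 2, by omega⟩
      set g : Fin (k' + 2) → Rd d × Rd d := fun j => f ((⇑σ)^[j.val] 0) with hg_def
      have hg0 : g 0 = f 0 := by simp [hg_def]
      have hgΓ : ∀ j, j ≠ 0 → g j ∈ Γ := by
        intro j hj
        refine hf _ ?_
        intro hcon
        have hjpos : 0 < j.val := Nat.pos_of_ne_zero (by intro h; exact hj (Fin.ext (by simp [h])))
        have : m ≤ j.val :=
          Function.IsPeriodicPt.minimalPeriod_le hjpos hcon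
        omega
      rw [hk'] at hper
      -- bound A by the plain sup over g
      have hAg : A ≤ Finset.univ.sup' Finset.univ_nonempty fun j => c (g j) := by
        have hlt : s % m < k' + 2 := by rw [← hk']; exact Nat.mod_lt _ hm
        have hgj : g (⟨s % m, hlt⟩ : Fin (k' + 2)) = f i₀ := by
          show f ((⇑σ)^[s % m] 0) = f i₀
          rw [hs']
        rw [hA_def, hA, ← hgj]
        exact Finset.le_sup' (fun j : Fin (k' + 2) => c (g j)) (Finset.mem_univ _)
      -- bound the cyclic sup over g by B
      have hgB : (Finset.univ.sup' Finset.univ_nonempty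
          fun j => c ((g j).1, (g (j + 1)).2)) ≤ B := by
        refine Finset.sup'_le _ _ fun j _ => ?_
        have hj1 : (⇑σ)^[((j + 1 : Fin (k' + 2))).val] (0 : Fin (k + 2)) =
            σ ((⇑σ)^[j.val] 0) := iter_add_one (⇑σ) 0 hper j
        have : c ((g j).1, (g (j + 1)).2) =
            c ((f ((⇑σ)^[j.val] 0)).1, (f (σ ((⇑σ)^[j.val] 0))).2) := by
          rw [hg_def]; simp only []; rw [hj1]
        rw [this, hB_def]
        exact Finset.le_sup' (fun i => c ((f i).1, (f (σ i)).2))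
          (Finset.mem_univ ((⇑σ)^[j.val] 0))
      set T : ℝ := (Finset.univ.sup' Finset.univ_nonempty fun j => c (g j)) -
        Finset.univ.sup' Finset.univ_nonempty fun j => c ((g j).1, (g (j + 1)).2) with hT_def
      have hABT : A - B ≤ T := by rw [hT_def]; linarith
      have hTI : ((T : ℝ) : EReal) ≤ ItildeRate c Γ (f 0) := by
        rw [ItildeRate]
        exact le_iSup_of_le k' (le_iSup_of_le g (le_iSup_of_le hg0 (le_iSup_of_le hgΓ le_rfl)))
      refine le_max_of_le_right ?_
      exact le_trans (EReal.coe_le_coe_iff.mpr hABT) hTI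

/-- The parametrized family: replace the 0-th entry by `z`. -/
private def fam {k : ℕ} (g : Fin (k + 2) → Rd d × Rd d) (z : Rd d × Rd d) :
    Fin (k + 2) → Rd d × Rd d := fun i => if i = 0 then z else g i

private lemma fam_eq_self {k : ℕ} (f : Fin (k + 2) → Rd d × Rd d) {z : Rd d × Rd d}
    (h0 : f 0 = z) : fam f z = f := by
  funext i
  rw [fam]
  split_ifs with h
  · rw [h, h0]
  · rfl

private lemma continuous_fam {k : ℕ} (g : Fin (k + 2) → Rd d × Rd d) (i : Fin (k + 2)) :
    Continuous fun z => fam g z i := by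
  have hrw : (fun z : Rd d × Rd d => fam g z i) = fun z => if i = 0 then z else g i := rfl
  rw [hrw]
  split_ifs with h
  · exact continuous_id
  · exact continuous_const

/-- `Irate` as a supremum of continuous functions of `z`. -/
private lemma Irate_eq (c : Rd d × Rd d → ℝ) (Γ : Set (Rd d × Rd d)) (z : Rd d × Rd d) :
    Irate c Γ z = ⨆ (k : ℕ) (g : Fin (k + 2) → Rd d × Rd d) (_ : ∀ i, i ≠ 0 → g i ∈ Γ)
      (σ : Equiv.Perm (Fin (k + 2))),
      (((Finset.univ.sup' Finset.univ_nonempty fun i => c (fam g z i)) -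
        Finset.univ.sup' Finset.univ_nonempty
          fun i => c ((fam g z i).1, (fam g z (σ i)).2) : ℝ) : EReal) := by
  rw [Irate]
  apply le_antisymm
  · refine iSup_le fun k => iSup_le fun f => iSup_le fun h0 => iSup_le fun hfΓ =>
      iSup_le fun σ => ?_
    refine le_iSup_of_le k (le_iSup_of_le f (le_iSup_of_le hfΓ (le_iSup_of_le σ (le_of_eq ?_))))
    rw [fam_eq_self f h0]
  · refine iSup_le fun k => iSup_le fun g => iSup_le fun hgΓ => iSup_le fun σ => ?_
    refine le_iSup_of_le k (le_iSup_of_le (fam g z)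
      (le_iSup_of_le (if_pos rfl) (le_iSup_of_le ?_ (le_iSup_of_le σ le_rfl))))
    intro i hi
    have : fam g z i = g i := by rw [fam]; simp [hi]
    rw [this]
    exact hgΓ i hi

/-- `ItildeRate` as a supremum of continuous functions of `z`. -/
private lemma ItildeRate_eq (c : Rd d × Rd d → ℝ) (Γ : Set (Rd d × Rd d)) (z : Rd d × Rd d) :
    ItildeRate c Γ z = ⨆ (k : ℕ) (g : Fin (k + 2) → Rd d × Rd d) (_ : ∀ i, i ≠ 0 → g i ∈ Γ),
      (((Finset.univ.sup' Finset.univ_nonempty fun i => c (fam g z i)) -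
        Finset.univ.sup' Finset.univ_nonempty
          fun i => c ((fam g z i).1, (fam g z (i + 1)).2) : ℝ) : EReal) := by
  rw [ItildeRate]
  apply le_antisymm
  · refine iSup_le fun k => iSup_le fun f => iSup_le fun h0 => iSup_le fun hfΓ => ?_
    refine le_iSup_of_le k (le_iSup_of_le f (le_iSup_of_le hfΓ (le_of_eq ?_)))
    rw [fam_eq_self f h0]
  · refine iSup_le fun k => iSup_le fun g => iSup_le fun hgΓ => ?_
    refine le_iSup_of_le k (le_iSup_of_le (fam g z)
      (le_iSup_of_le (if_pos rfl) (le_iSup_of_le ?_ le_rfl)))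
    intro i hi
    have : fam g z i = g i := by rw [fam]; simp [hi]
    rw [this]
    exact hgΓ i hi

private lemma lsc_term_I (hc : Continuous c) (k : ℕ) (g : Fin (k + 2) → Rd d × Rd d)
    (σ : Equiv.Perm (Fin (k + 2))) :
    LowerSemicontinuous fun z : Rd d × Rd d =>
      (((Finset.univ.sup' Finset.univ_nonempty fun i => c (fam g z i)) -
        Finset.univ.sup' Finset.univ_nonempty
          fun i => c ((fam g z i).1, (fam g z (σ i)).2) : ℝ) : EReal) := by
  refine Continuous.lowerSemicontinuous ?_
  refine continuous_coe_real_ereal.comp (Continuous.sub ?_ ?_)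
  · exact Continuous.finset_sup'_apply Finset.univ_nonempty
      fun i _ => hc.comp (continuous_fam g i)
  · refine Continuous.finset_sup'_apply Finset.univ_nonempty fun i _ => ?_
    exact hc.comp (((continuous_fam g i).fst).prodMk ((continuous_fam g (σ i)).snd))

private lemma lsc_term_It (hc : Continuous c) (k : ℕ) (g : Fin (k + 2) → Rd d × Rd d) :
    LowerSemicontinuous fun z : Rd d × Rd d =>
      (((Finset.univ.sup' Finset.univ_nonempty fun i => c (fam g z i)) -
        Finset.univ.sup' Finset.univ_nonempty
          fun i => c ((fam g z i).1, (fam g z (i + 1)).2) : ℝ) : EReal) := by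
  refine Continuous.lowerSemicontinuous ?_
  refine continuous_coe_real_ereal.comp (Continuous.sub ?_ ?_)
  · exact Continuous.finset_sup'_apply Finset.univ_nonempty
      fun i _ => hc.comp (continuous_fam g i)
  · refine Continuous.finset_sup'_apply Finset.univ_nonempty fun i _ => ?_
    exact hc.comp (((continuous_fam g i).fst).prodMk ((continuous_fam g (i + 1)).snd))

/-- `Irate` is nonnegative as soon as `Γ` is nonempty. -/
private lemma Irate_nonneg (hne : ∃ w, w ∈ Γ) (z : Rd d × Rd d) : 0 ≤ Irate c Γ z := by
  obtain ⟨w, hw⟩ := hne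
  rw [Irate]
  refine le_iSup_of_le 0 (le_iSup_of_le (fam (fun _ => w) z)
    (le_iSup_of_le (if_pos rfl) (le_iSup_of_le ?_ (le_iSup_of_le 1 ?_))))
  · intro i hi
    have : fam (fun _ => w) z i = w := by rw [fam]; simp [hi]
    rw [this]; exact hw
  · have : (fun i : Fin 2 => c ((fam (fun _ => w) z i).1, (fam (fun _ => w) z
        ((1 : Equiv.Perm (Fin 2)) i)).2)) = fun i => c (fam (fun _ => w) z i) := by
      funext i
      simp
    rw [this, sub_self]
    simp

/-- `ItildeRate ≤ Irate` via the cyclic-shift permutation. -/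
private lemma itilde_le_irate (z : Rd d × Rd d) : ItildeRate c Γ z ≤ Irate c Γ z := by
  rw [ItildeRate, Irate]
  refine iSup_le fun k => iSup_le fun f => iSup_le fun h0 => iSup_le fun hfΓ => ?_
  refine le_iSup_of_le k (le_iSup_of_le f (le_iSup_of_le h0 (le_iSup_of_le hfΓ
    (le_iSup_of_le (Equiv.addRight 1) (le_of_eq ?_)))))
  norm_cast

private lemma msupport_nonempty {E : Type*} [MeasurableSpace E] [TopologicalSpace E]
    [SecondCountableTopology E] (γ : Measure E) [IsProbabilityMeasure γ] :
    ∃ w, w ∈ msupport γ := by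
  obtain ⟨x, -, hx⟩ := MeasureTheory.exists_mem_forall_mem_nhdsWithin_pos_measure
    (μ := γ) (s := Set.univ) (by simp)
  exact ⟨x, fun U hU => (hx U (by rwa [nhdsWithin_univ])).ne'⟩

end RateAux

/-- (Properties of the rate function I_∞) I_∞ = max(0, Ĩ_∞), both are lower semicontinuous,
    I_∞ ≥ 0 everywhere and I_∞ = 0 on Γ_∞. -/
theorem Irate_properties {d : ℕ} (c : Rd d × Rd d → ℝ) (hc : Continuous c)
    (hc1 : ∀ z, 1 ≤ c z)
    (μ ν : Measure (Rd d)) [IsProbabilityMeasure μ] [IsProbabilityMeasure ν]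
    (hμ : IsCompact (msupport μ)) (hν : IsCompact (msupport ν))
    (γinf : Measure (Rd d × Rd d)) (hγinfP : IsProbabilityMeasure γinf)
    (hγinfC : IsCoupling γinf μ ν) (hΓ : InftyCM c (msupport γinf)) :
    (∀ z, Irate c (msupport γinf) z = max 0 (ItildeRate c (msupport γinf) z)) ∧
    LowerSemicontinuous (Irate c (msupport γinf)) ∧
    LowerSemicontinuous (ItildeRate c (msupport γinf)) ∧
    (∀ z, 0 ≤ Irate c (msupport γinf) z) ∧
    (∀ z ∈ msupport γinf, Irate c (msupport γinf) z = 0) := by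
  have hne : ∃ w, w ∈ msupport γinf := msupport_nonempty γinf
  have hnonneg : ∀ z, 0 ≤ Irate c (msupport γinf) z := fun z => Irate_nonneg hne z
  have hmax : ∀ z, Irate c (msupport γinf) z = max 0 (ItildeRate c (msupport γinf) z) := by
    intro z
    apply le_antisymm
    · rw [Irate]
      refine iSup_le fun k => iSup_le fun f => iSup_le fun h0 => iSup_le fun hfΓ =>
        iSup_le fun σ => ?_
      have := key hΓ k f hfΓ σ
      rwa [h0] at this
    · exact max_le (hnonneg z) (itilde_le_irate z)
  refine ⟨hmax, ?_, ?_, hnonneg, ?_⟩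
  · rw [funext fun z => Irate_eq c (msupport γinf) z]
    exact lowerSemicontinuous_iSup fun k => lowerSemicontinuous_iSup fun g =>
      lowerSemicontinuous_iSup fun _ => lowerSemicontinuous_iSup fun σ => lsc_term_I hc k g σ
  · rw [funext fun z => ItildeRate_eq c (msupport γinf) z]
    exact lowerSemicontinuous_iSup fun k => lowerSemicontinuous_iSup fun g =>
      lowerSemicontinuous_iSup fun _ => lsc_term_It hc k g
  · intro z hz
    refine le_antisymm ?_ (hnonneg z)
    rw [Irate]
    refine iSup_le fun k => iSup_le fun f => iSup_le fun h0 => iSup_le fun hfΓ =>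
      iSup_le fun σ => ?_
    obtain ⟨i₀, -, hA⟩ := Finset.exists_mem_eq_sup' Finset.univ_nonempty fun i => c (f i)
    have hall : ∀ i, f i ∈ msupport γinf := fun i => by
      by_cases h : i = 0
      · rw [h, h0]; exact hz
      · exact hfΓ i h
    have hAB := orbit_le hΓ f σ i₀ fun j => hall _
    rw [hA]
    have : ((c (f i₀) -
        Finset.univ.sup' Finset.univ_nonempty (fun i => c ((f i).1, (f (σ i)).2)) : ℝ) : EReal)
        ≤ ((0 : ℝ) : EReal) := EReal.coe_le_coe_iff.mpr (by linarith)
    simpa using this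
end
end

section
/- (Coincidence of I_∞ and Ĩ_∞ on the marginal supports) The functions I_∞ and Ĩ_∞ coincide on (spt(μ) × ℝ^d) ∪ (ℝ^d × spt(ν)). -/
open MeasureTheory ENNReal Filter
open scoped Classical

noncomputable section

lemma fin_add_one_val {n : ℕ} (j : Fin (n+1)) : ((j+1 : Fin (n+1)) : ℕ) = (j.val + 1) % (n+1) := by
  rw [Fin.val_add]
  rw [Fin.val_one']
  conv_rhs => rw [Nat.add_mod, Nat.mod_eq_of_lt j.isLt]

lemma msupport_exists_of_ne_zero {E : Type*} [MeasurableSpace E] [TopologicalSpace E]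
    [SecondCountableTopology E] (γ : Measure E) {U : Set E} (hU : IsOpen U) (h : γ U ≠ 0) :
    ∃ w ∈ U, w ∈ msupport γ := by
  by_contra hcon
  push_neg at hcon
  apply h
  apply measure_null_of_locally_null
  intro x hx
  obtain ⟨V, hV, hV0⟩ := by
    have := hcon x hx
    simpa [msupport] using this
  exact ⟨V ∩ U, Filter.inter_mem (nhdsWithin_le_nhds hV) self_mem_nhdsWithin,
    measure_mono_null Set.inter_subset_left hV0⟩

lemma msupport_subset_prod {d : ℕ} {μ ν : Measure (Rd d)} {γ : Measure (Rd d × Rd d)}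
    (hC : IsCoupling γ μ ν) : msupport γ ⊆ (msupport μ) ×ˢ (msupport ν) := by
  rintro ⟨a, b⟩ hab
  constructor
  · intro U hU
    obtain ⟨V, hVU, hVopen, haV⟩ := mem_nhds_iff.1 hU
    have h1 : γ (V ×ˢ Set.univ) ≠ 0 := by
      apply hab
      exact (hVopen.prod isOpen_univ).mem_nhds (by simp [haV])
    intro h0
    apply h1
    have : μ V = 0 := measure_mono_null hVU h0
    rw [← hC.1, Measure.map_apply measurable_fst hVopen.measurableSet] at this
    simpa [Set.prod_univ] using this
  · intro U hU
    obtain ⟨V, hVU, hVopen, haV⟩ := mem_nhds_iff.1 hU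
    have h1 : γ (Set.univ ×ˢ V) ≠ 0 := by
      apply hab
      exact (isOpen_univ.prod hVopen).mem_nhds (by simp [haV])
    intro h0
    apply h1
    have : ν V = 0 := measure_mono_null hVU h0
    rw [← hC.2, Measure.map_apply measurable_snd hVopen.measurableSet] at this
    simpa [Set.univ_prod] using this

lemma cycle_bound {d k : ℕ} (c : Rd d × Rd d → ℝ) (Γ : Set (Rd d × Rd d)) (hΓ : InftyCM c Γ)
    (f : Fin (k+2) → Rd d × Rd d) (σ : Equiv.Perm (Fin (k+2))) (i : Fin (k+2))
    (hi : ∀ j : ℕ, f ((⇑σ)^[j] i) ∈ Γ) :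
    c (f i) ≤ Finset.univ.sup' Finset.univ_nonempty (fun a => c ((f a).1, (f (σ a)).2)) := by
  obtain ⟨L, hL⟩ : ∃ L, orderOf σ = L + 1 :=
    ⟨orderOf σ - 1, by have := orderOf_pos σ; omega⟩
  have hper : Function.IsPeriodicPt ⇑σ (L+1) i := by
    show (⇑σ)^[L+1] i = i
    rw [Equiv.Perm.iterate_eq_pow, ← hL, pow_orderOf_eq_one]
    rfl
  set x : Fin (L+1) → Rd d := fun j => (f ((⇑σ)^[(j : ℕ)] i)).1 with hx
  set y : Fin (L+1) → Rd d := fun j => (f ((⇑σ)^[(j : ℕ)] i)).2 with hy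
  have hmem : ∀ j, (x j, y j) ∈ Γ := fun j => by
    simpa [hx, hy] using hi j.val
  have key := hΓ L x y hmem
  have h0 : c (f i) ≤ Finset.univ.sup' Finset.univ_nonempty fun j => c (x j, y j) := by
    have := Finset.le_sup' (fun j => c (x j, y j)) (Finset.mem_univ (0 : Fin (L+1)))
    exact this
  have h1 : (Finset.univ.sup' Finset.univ_nonempty fun j => c (x j, y (j + 1))) ≤
      Finset.univ.sup' Finset.univ_nonempty (fun a => c ((f a).1, (f (σ a)).2)) := by
    apply Finset.sup'_le
    intro j _
    have hiter : (⇑σ)^[((j+1 : Fin (L+1)) : ℕ)] i = σ ((⇑σ)^[(j : ℕ)] i) := by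
      rw [fin_add_one_val, hper.iterate_mod_apply, Function.iterate_succ_apply']
    have heq : c (x j, y (j+1)) = c ((f ((⇑σ)^[(j:ℕ)] i)).1, (f (σ ((⇑σ)^[(j:ℕ)] i))).2) := by
      simp only [hx, hy]
      rw [hiter]
    rw [heq]
    exact Finset.le_sup' (fun a => c ((f a).1, (f (σ a)).2))
      (Finset.mem_univ ((⇑σ)^[(j:ℕ)] i))
  exact h0.trans (key.trans h1)

lemma perm_bound {d k : ℕ} (c : Rd d × Rd d → ℝ) (Γ : Set (Rd d × Rd d)) (hΓ : InftyCM c Γ)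
    (z : Rd d × Rd d) (hI0 : (0 : EReal) ≤ ItildeRate c Γ z)
    (f : Fin (k+2) → Rd d × Rd d) (h0 : f 0 = z) (hf : ∀ i, i ≠ 0 → f i ∈ Γ)
    (σ : Equiv.Perm (Fin (k+2))) :
    (((Finset.univ.sup' Finset.univ_nonempty fun i => c (f i)) -
        Finset.univ.sup' Finset.univ_nonempty fun i => c ((f i).1, (f (σ i)).2) : ℝ) : EReal) ≤
      ItildeRate c Γ z := by
  set S : ℝ := Finset.univ.sup' Finset.univ_nonempty fun i => c ((f i).1, (f (σ i)).2) with hS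
  set m := Function.minimalPeriod ⇑σ 0 with hmdef
  have hperm : Function.IsPeriodicPt ⇑σ m 0 := Function.isPeriodicPt_minimalPeriod ⇑σ 0
  have hperord : Function.IsPeriodicPt ⇑σ (orderOf σ) 0 := by
    show (⇑σ)^[orderOf σ] 0 = 0
    rw [Equiv.Perm.iterate_eq_pow, pow_orderOf_eq_one]; rfl
  have hm : 0 < m := Function.IsPeriodicPt.minimalPeriod_pos (orderOf_pos σ) hperord
  -- points whose orbit avoids 0 are bounded by S
  have hout : ∀ i : Fin (k+2), (∀ j : ℕ, (⇑σ)^[j] i ≠ 0) → c (f i) ≤ S := by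
    intro i hi
    exact cycle_bound c Γ hΓ f σ i (fun j => hf _ (hi j))
  -- points whose orbit meets 0 are in the orbit of 0
  have horbit : ∀ i : Fin (k+2), (¬ ∀ j : ℕ, (⇑σ)^[j] i ≠ 0) →
      ∃ j : ℕ, j < m ∧ (⇑σ)^[j] 0 = i := by
    intro i hi
    push_neg at hi
    obtain ⟨t, ht⟩ := hi
    set N := orderOf σ * (t + 1) with hN
    have hNt : t ≤ N := by
      have h1 : 1 ≤ orderOf σ := orderOf_pos σ
      calc t ≤ t + 1 := Nat.le_succ t
        _ = 1 * (t+1) := (one_mul _).symm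
        _ ≤ orderOf σ * (t+1) := Nat.mul_le_mul_right _ h1
    have hNi : (⇑σ)^[N] i = i := by
      rw [Equiv.Perm.iterate_eq_pow, hN, pow_mul, pow_orderOf_eq_one, one_pow]; rfl
    have : (⇑σ)^[N - t] 0 = i := by
      rw [← ht, ← Function.iterate_add_apply, Nat.sub_add_cancel hNt, hNi]
    refine ⟨(N - t) % m, Nat.mod_lt _ hm, ?_⟩
    rw [hperm.iterate_mod_apply, this]
  by_cases hm1 : m = 1
  · -- 0 is a fixed point of σ
    have hσ0 : σ 0 = 0 := by
      have := hperm
      rw [hm1] at this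
      exact this
    have hsup : (Finset.univ.sup' Finset.univ_nonempty fun i => c (f i)) ≤ S := by
      apply Finset.sup'_le
      intro i _
      by_cases hcase : ∀ j : ℕ, (⇑σ)^[j] i ≠ 0
      · exact hout i hcase
      · obtain ⟨j, hj, hji⟩ := horbit i hcase
        have hi0 : i = 0 := by
          rw [hm1] at hj
          interval_cases j
          · simpa using hji.symm
        rw [hi0]
        have : c ((f (0 : Fin (k+2))).1, (f (σ 0)).2) ≤ S :=
          Finset.le_sup' (fun a => c ((f a).1, (f (σ a)).2)) (Finset.mem_univ 0)
        rw [hσ0] at this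
        simpa using this
    calc (((Finset.univ.sup' Finset.univ_nonempty fun i => c (f i)) - S : ℝ) : EReal)
        ≤ ((0 : ℝ) : EReal) := by
          rw [EReal.coe_le_coe_iff]; linarith
      _ ≤ ItildeRate c Γ z := by rw [EReal.coe_zero]; exact hI0
  · -- the cycle of 0 has length ≥ 2
    obtain ⟨k', hk'⟩ : ∃ k', m = k' + 2 := ⟨m - 2, by omega⟩
    set g : Fin (k'+2) → Rd d × Rd d := fun j => f ((⇑σ)^[(j : ℕ)] 0) with hg
    have hg0 : g 0 = z := by simpa [hg] using h0
    have hgΓ : ∀ j, j ≠ 0 → g j ∈ Γ := by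
      intro j hj
      apply hf
      intro hcon
      have hjv : 0 < (j : ℕ) := by
        rcases Nat.eq_zero_or_pos (j : ℕ) with h | h
        · exact absurd (Fin.ext h) hj
        · exact h
      have : m ≤ (j : ℕ) :=
        Function.IsPeriodicPt.minimalPeriod_le hjv hcon
      omega
    set V : ℝ := (Finset.univ.sup' Finset.univ_nonempty fun j => c (g j)) -
        Finset.univ.sup' Finset.univ_nonempty fun j => c ((g j).1, (g (j + 1)).2) with hV
    have hVle : ((V : ℝ) : EReal) ≤ ItildeRate c Γ z := by
      rw [ItildeRate]
      refine le_iSup_of_le k' ?_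
      refine le_iSup_of_le g ?_
      refine le_iSup_of_le hg0 ?_
      exact le_iSup_of_le hgΓ le_rfl
    have h2 : (Finset.univ.sup' Finset.univ_nonempty fun j => c ((g j).1, (g (j + 1)).2)) ≤ S := by
      apply Finset.sup'_le
      intro j _
      have hiter : (⇑σ)^[((j+1 : Fin (k'+2)) : ℕ)] 0 = σ ((⇑σ)^[(j : ℕ)] 0) := by
        rw [fin_add_one_val]
        have : Function.IsPeriodicPt ⇑σ (k'+2) 0 := by rw [← hk']; exact hperm
        rw [this.iterate_mod_apply, Function.iterate_succ_apply']
      have heq : c ((g j).1, (g (j+1)).2) =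
          c ((f ((⇑σ)^[(j:ℕ)] 0)).1, (f (σ ((⇑σ)^[(j:ℕ)] 0))).2) := by
        simp only [hg]
        rw [hiter]
      rw [heq]
      exact Finset.le_sup' (fun a => c ((f a).1, (f (σ a)).2))
        (Finset.mem_univ ((⇑σ)^[(j:ℕ)] 0))
    have h3 : (Finset.univ.sup' Finset.univ_nonempty fun i => c (f i)) ≤
        max (Finset.univ.sup' Finset.univ_nonempty fun j => c (g j)) S := by
      apply Finset.sup'_le
      intro i _
      by_cases hcase : ∀ j : ℕ, (⇑σ)^[j] i ≠ 0
      · exact le_max_of_le_right (hout i hcase)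
      · obtain ⟨j, hj, hji⟩ := horbit i hcase
        apply le_max_of_le_left
        have : c (f i) = c (g ⟨j, by omega⟩) := by
          simp only [hg]
          rw [← hji]
        rw [this]
        exact Finset.le_sup' (fun a => c (g a)) (Finset.mem_univ _)
    have hreal : (Finset.univ.sup' Finset.univ_nonempty fun i => c (f i)) - S ≤ max V 0 := by
      rcases max_cases (Finset.univ.sup' Finset.univ_nonempty fun j => c (g j)) S with
        ⟨hmax, _⟩ | ⟨hmax, _⟩ <;> rw [hmax] at h3
      · have : (Finset.univ.sup' Finset.univ_nonempty fun i => c (f i)) - S ≤ V := by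
          rw [hV]; linarith
        exact this.trans (le_max_left _ _)
      · have : (Finset.univ.sup' Finset.univ_nonempty fun i => c (f i)) - S ≤ 0 := by linarith
        exact this.trans (le_max_right _ _)
    calc (((Finset.univ.sup' Finset.univ_nonempty fun i => c (f i)) - S : ℝ) : EReal)
        ≤ ((max V 0 : ℝ) : EReal) := by rw [EReal.coe_le_coe_iff]; exact hreal
      _ ≤ ItildeRate c Γ z := by
          rcases max_cases V 0 with ⟨hmax, _⟩ | ⟨hmax, _⟩ <;> rw [hmax]
          · exact hVle
          · rw [EReal.coe_zero]; exact hI0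

lemma sup2 (h : Fin 2 → ℝ) : Finset.univ.sup' Finset.univ_nonempty h = max (h 0) (h 1) := by
  apply le_antisymm
  · apply Finset.sup'_le
    intro b _
    fin_cases b
    · exact le_max_left _ _
    · exact le_max_right _ _
  · apply max_le
    · exact Finset.le_sup' h (Finset.mem_univ 0)
    · exact Finset.le_sup' h (Finset.mem_univ 1)

lemma itilde_nonneg {d : ℕ} (c : Rd d × Rd d → ℝ) (hc : Continuous c)
    (μ ν : Measure (Rd d)) (hμ : IsCompact (msupport μ)) (hν : IsCompact (msupport ν))
    (γinf : Measure (Rd d × Rd d)) (hγinfC : IsCoupling γinf μ ν)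
    (z : Rd d × Rd d) (hz : z.1 ∈ msupport μ ∨ z.2 ∈ msupport ν) :
    (0 : EReal) ≤ ItildeRate c (msupport γinf) z := by
  suffices h : ∀ ε : ℝ, 0 < ε → ((-ε : ℝ) : EReal) ≤ ItildeRate c (msupport γinf) z by
    by_contra hneg
    push_neg at hneg
    obtain ⟨x, hx1, hx2⟩ := EReal.lt_iff_exists_real_btwn.1 hneg
    have hx0 : x < 0 := by exact_mod_cast hx2
    have := h (-x) (by linarith)
    rw [neg_neg] at this
    exact absurd (this.trans_lt hx1) (lt_irrefl _)
  intro ε hε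
  -- uniform continuity on the compact product of supports
  set K := (msupport μ) ×ˢ (msupport ν) with hK
  have hKc : IsCompact K := hμ.prod hν
  have huc : UniformContinuousOn c K :=
    hKc.uniformContinuousOn_of_continuous hc.continuousOn
  obtain ⟨δ, hδ, hδp⟩ := Metric.uniformContinuousOn_iff.1 huc (ε/2) (by linarith)
  -- find a good point w ∈ Γ
  have claim : ∃ w ∈ msupport γinf,
      max (c (z.1, w.2)) (c (w.1, z.2)) ≤ max (c z) (c w) + ε := by
    rcases hz with hz1 | hz2
    · set W : Set (Rd d) := Metric.ball z.1 δ ∩ {x' | dist (c (x', z.2)) (c z) < ε/2} with hW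
      have hWopen : IsOpen W := by
        apply Metric.isOpen_ball.inter
        have : Continuous fun x' : Rd d => c (x', z.2) :=
          hc.comp (continuous_id.prodMk continuous_const)
        exact Metric.isOpen_ball.preimage this
      have hz1W : z.1 ∈ W := by
        constructor
        · exact Metric.mem_ball_self hδ
        · show dist (c (z.1, z.2)) (c z) < ε/2
          simp [Prod.mk.eta]
          linarith
      have hμW : μ W ≠ 0 := hz1 W (hWopen.mem_nhds hz1W)
      have hγW : γinf (W ×ˢ (Set.univ : Set (Rd d))) ≠ 0 := by
        intro h0
        apply hμW
        rw [← hγinfC.1, Measure.map_apply measurable_fst hWopen.measurableSet]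
        simpa [Set.prod_univ] using h0
      obtain ⟨w, hwU, hwΓ⟩ := msupport_exists_of_ne_zero γinf (hWopen.prod isOpen_univ) hγW
      have hwK : w ∈ K := msupport_subset_prod hγinfC hwΓ
      refine ⟨w, hwΓ, ?_⟩
      have e1 : dist (c (w.1, w.2)) (c (z.1, w.2)) < ε/2 := by
        apply hδp (w.1, w.2) (by simpa [Prod.mk.eta] using hwK) (z.1, w.2) ⟨hz1, hwK.2⟩
        rw [Prod.dist_eq]
        simp only [dist_self]
        rw [max_eq_left dist_nonneg]
        exact hwU.1.1
      have e2 : dist (c (w.1, z.2)) (c z) < ε/2 := hwU.1.2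
      rw [Prod.mk.eta] at e1
      rw [Real.dist_eq, abs_sub_lt_iff] at e1 e2
      apply max_le
      · have : c (z.1, w.2) ≤ c w + ε/2 := by linarith [e1.2]
        exact this.trans (by
          have : c w ≤ max (c z) (c w) := le_max_right _ _
          linarith)
      · have : c (w.1, z.2) ≤ c z + ε/2 := by linarith [e2.1]
        exact this.trans (by
          have : c z ≤ max (c z) (c w) := le_max_left _ _
          linarith)
    · set W : Set (Rd d) := Metric.ball z.2 δ ∩ {y' | dist (c (z.1, y')) (c z) < ε/2} with hW
      have hWopen : IsOpen W := by
        apply Metric.isOpen_ball.inter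
        have : Continuous fun y' : Rd d => c (z.1, y') :=
          hc.comp (continuous_const.prodMk continuous_id)
        exact Metric.isOpen_ball.preimage this
      have hz2W : z.2 ∈ W := by
        constructor
        · exact Metric.mem_ball_self hδ
        · show dist (c (z.1, z.2)) (c z) < ε/2
          simp [Prod.mk.eta]
          linarith
      have hνW : ν W ≠ 0 := hz2 W (hWopen.mem_nhds hz2W)
      have hγW : γinf ((Set.univ : Set (Rd d)) ×ˢ W) ≠ 0 := by
        intro h0
        apply hνW
        rw [← hγinfC.2, Measure.map_apply measurable_snd hWopen.measurableSet]
        simpa [Set.univ_prod] using h0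
      obtain ⟨w, hwU, hwΓ⟩ := msupport_exists_of_ne_zero γinf (isOpen_univ.prod hWopen) hγW
      have hwK : w ∈ K := msupport_subset_prod hγinfC hwΓ
      refine ⟨w, hwΓ, ?_⟩
      have e1 : dist (c (w.1, w.2)) (c (w.1, z.2)) < ε/2 := by
        apply hδp (w.1, w.2) (by simpa [Prod.mk.eta] using hwK) (w.1, z.2) ⟨hwK.1, hz2⟩
        rw [Prod.dist_eq]
        simp only [dist_self]
        rw [max_eq_right dist_nonneg]
        exact hwU.2.1
      have e2 : dist (c (z.1, w.2)) (c z) < ε/2 := hwU.2.2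
      rw [Prod.mk.eta] at e1
      rw [Real.dist_eq, abs_sub_lt_iff] at e1 e2
      apply max_le
      · have : c (z.1, w.2) ≤ c z + ε/2 := by linarith [e2.1]
        exact this.trans (by
          have : c z ≤ max (c z) (c w) := le_max_left _ _
          linarith)
      · have : c (w.1, z.2) ≤ c w + ε/2 := by linarith [e1.2]
        exact this.trans (by
          have : c w ≤ max (c z) (c w) := le_max_right _ _
          linarith)
  -- build the two-point configuration
  obtain ⟨w, hwΓ, hbound⟩ := claim
  set f : Fin 2 → Rd d × Rd d := ![z, w] with hf
  have hf0 : f 0 = z := rfl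
  have hfΓ : ∀ i : Fin 2, i ≠ 0 → f i ∈ msupport γinf := by
    intro i hi
    fin_cases i
    · exact absurd rfl hi
    · exact hwΓ
  have hval : (Finset.univ.sup' Finset.univ_nonempty fun i => c (f i)) -
      (Finset.univ.sup' Finset.univ_nonempty fun i => c ((f i).1, (f (i + 1)).2)) =
      max (c z) (c w) - max (c (z.1, w.2)) (c (w.1, z.2)) := by
    rw [sup2, sup2]
    congr 1
  calc ((-ε : ℝ) : EReal) ≤
      ((max (c z) (c w) - max (c (z.1, w.2)) (c (w.1, z.2)) : ℝ) : EReal) := by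
        rw [EReal.coe_le_coe_iff]; linarith
    _ ≤ ItildeRate c (msupport γinf) z := by
        rw [ItildeRate]
        apply le_iSup_of_le 0
        apply le_iSup_of_le f
        apply le_iSup_of_le hf0
        apply le_iSup_of_le hfΓ
        rw [hval]

/-- (Coincidence of I_∞ and Ĩ_∞ on the marginal supports) I_∞ = Ĩ_∞ on
    (spt(μ) × ℝ^d) ∪ (ℝ^d × spt(ν)). -/
theorem Irate_eq_ItildeRate_on_supports {d : ℕ} (c : Rd d × Rd d → ℝ) (hc : Continuous c)
    (hc1 : ∀ z, 1 ≤ c z)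
    (μ ν : Measure (Rd d)) [IsProbabilityMeasure μ] [IsProbabilityMeasure ν]
    (hμ : IsCompact (msupport μ)) (hν : IsCompact (msupport ν))
    (γinf : Measure (Rd d × Rd d)) (hγinfP : IsProbabilityMeasure γinf)
    (hγinfC : IsCoupling γinf μ ν) (hΓ : InftyCM c (msupport γinf)) :
    ∀ z : Rd d × Rd d, z.1 ∈ msupport μ ∨ z.2 ∈ msupport ν →
      Irate c (msupport γinf) z = ItildeRate c (msupport γinf) z := by
  intro z hz
  have hI0 : (0 : EReal) ≤ ItildeRate c (msupport γinf) z :=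
    itilde_nonneg c hc μ ν hμ hν γinf hγinfC z hz
  apply le_antisymm
  · rw [Irate]
    refine iSup_le fun k => iSup_le fun f => iSup_le fun h1 => iSup_le fun h2 =>
      iSup_le fun σ => ?_
    exact perm_bound c (msupport γinf) hΓ z hI0 f h1 h2 σ
  · rw [ItildeRate, Irate]
    refine iSup_le fun k => iSup_le fun f => iSup_le fun h1 => iSup_le fun h2 => ?_
    apply le_iSup_of_le k
    apply le_iSup_of_le f
    apply le_iSup_of_le h1
    apply le_iSup_of_le h2
    apply le_iSup_of_le (Equiv.addRight (1 : Fin (k + 2)))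
    simp only [Equiv.coe_addRight]
    exact le_rfl
end
end

section
/- (Permutation formula for v_∞ in the bistochastic case) Let N = M and μ_i = ν_j = 1/N for all i, j, so that Π(μ,ν) is (up to the factor 1/N) the set of N×N bistochastic matrices. Then v_∞ := min_{γ∈Π(μ,ν)} max{c_{ij} : γ^{ij} > 0} = min over permutations σ of {1,…,N} of max_{1≤i≤N} c_{i,σ(i)}; in particular the minimum of J_∞ is attained at a permutation matrix divided by N. -/
open scoped BigOperators

noncomputable section

/-- Discrete transport plans: N×M matrices with nonnegative entries, row sums μ and
    column sums ν. -/
def discreteCouplings {N M : ℕ} (μ : Fin N → ℝ) (ν : Fin M → ℝ) :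
    Set (Fin N → Fin M → ℝ) :=
  {γ | (∀ i j, 0 ≤ γ i j) ∧ (∀ i, ∑ j, γ i j = μ i) ∧ (∀ j, ∑ i, γ i j = ν j)}

/-- J_∞(γ) = max{c_ij : γ^{ij} > 0} (as a supremum of the corresponding set of reals). -/
def JinfD {N M : ℕ} (c : Fin N → Fin M → ℝ) (γ : Fin N → Fin M → ℝ) : ℝ :=
  sSup {r | ∃ i j, 0 < γ i j ∧ c i j = r}

/-- v_∞ = min_{γ ∈ Π(μ,ν)} J_∞(γ) in the discrete setting. -/
def vInfD {N M : ℕ} (c : Fin N → Fin M → ℝ) (μ : Fin N → ℝ) (ν : Fin M → ℝ) : ℝ :=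
  sInf {r | ∃ γ ∈ discreteCouplings μ ν, JinfD c γ = r}

section aux

variable {N : ℕ}

lemma perm_mem_couplings' (hN : 0 < N) (σ : Equiv.Perm (Fin N)) :
    (fun i j => if j = σ i then (1 : ℝ) / N else 0) ∈
      discreteCouplings (fun _ : Fin N => (1 : ℝ) / N) (fun _ : Fin N => (1 : ℝ) / N) := by
  refine ⟨fun i j => ?_, fun i => ?_, fun j => ?_⟩
  · dsimp only; split_ifs
    · positivity
    · exact le_refl _
  · show (∑ j, if j = σ i then (1:ℝ)/N else 0) = 1/N
    simp
  · show (∑ i, if j = σ i then (1:ℝ)/N else 0) = 1/N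
    have h : ∀ i : Fin N, (j = σ i) ↔ (i = σ.symm j) := fun i => by
      constructor <;> intro h <;> simp [h]
    simp only [h]
    simp

lemma exists_perm_pos (hN : 0 < N) (γ : Fin N → Fin N → ℝ)
    (hγ : γ ∈ discreteCouplings (fun _ : Fin N => (1:ℝ)/N) (fun _ : Fin N => (1:ℝ)/N)) :
    ∃ σ : Equiv.Perm (Fin N), ∀ i, 0 < γ i (σ i) := by
  classical
  obtain ⟨hpos, hrow, hcol⟩ := hγ
  set t : Fin N → Finset (Fin N) := fun i => Finset.univ.filter (fun j => 0 < γ i j) with ht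
  have hall : ∀ s : Finset (Fin N), s.card ≤ (s.biUnion t).card := by
    intro s
    have key : (s.card : ℝ) * (1/N) ≤ ((s.biUnion t).card : ℝ) * (1/N) := by
      calc (s.card : ℝ) * (1/N) = ∑ _i ∈ s, (1/N : ℝ) := by
            rw [Finset.sum_const, nsmul_eq_mul]
        _ = ∑ i ∈ s, ∑ j, γ i j := by
            refine Finset.sum_congr rfl fun i _ => ?_; rw [hrow i]
        _ = ∑ i ∈ s, ∑ j ∈ s.biUnion t, γ i j := by
            refine Finset.sum_congr rfl fun i hi => ?_
            refine (Finset.sum_subset (Finset.subset_univ _) ?_).symm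
            intro j _ hj
            by_contra h
            have hpj : 0 < γ i j := lt_of_le_of_ne (hpos i j) (Ne.symm h)
            exact hj (Finset.mem_biUnion.mpr ⟨i, hi, by simp [ht, hpj]⟩)
        _ = ∑ j ∈ s.biUnion t, ∑ i ∈ s, γ i j := Finset.sum_comm
        _ ≤ ∑ j ∈ s.biUnion t, ∑ i, γ i j := by
            refine Finset.sum_le_sum fun j _ => ?_
            exact Finset.sum_le_sum_of_subset_of_nonneg (Finset.subset_univ _)
              (fun i _ _ => hpos i j)
        _ = ∑ _j ∈ s.biUnion t, (1/N : ℝ) := by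
            refine Finset.sum_congr rfl fun j _ => ?_; rw [hcol j]
        _ = ((s.biUnion t).card : ℝ) * (1/N) := by
            rw [Finset.sum_const, nsmul_eq_mul]
    have hpos' : (0:ℝ) < 1/N := by positivity
    exact_mod_cast (mul_le_mul_iff_of_pos_right hpos').mp key
  obtain ⟨f, hfinj, hf⟩ := (Finset.all_card_le_biUnion_card_iff_exists_injective t).mp hall
  refine ⟨Equiv.ofBijective f (Finite.injective_iff_bijective.mp hfinj), fun i => ?_⟩
  have := hf i
  simp only [ht, Finset.mem_filter] at this
  exact this.2

end aux

/-- (Permutation formula for v_∞ in the bistochastic case) When N = M and all weights equal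
    1/N, one has v_∞ = min_{σ ∈ Σ(N)} max_i c_{i,σ(i)}, and the minimum of J_∞ is attained at
    (1/N times) a permutation matrix. -/
theorem vInf_bistochastic_perm {d N : ℕ} (hN : 0 < N)
    (x y : Fin N → EuclideanSpace ℝ (Fin d))
    (c : EuclideanSpace ℝ (Fin d) × EuclideanSpace ℝ (Fin d) → ℝ)
    (hc : Continuous c) (hc0 : ∀ z, 0 ≤ c z) :
    vInfD (fun i j => c (x i, y j)) (fun _ => (1 : ℝ) / N) (fun _ => (1 : ℝ) / N) =
      sInf {r | ∃ σ : Equiv.Perm (Fin N), sSup {s | ∃ i, c (x i, y (σ i)) = s} = r} ∧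
    ∃ σ : Equiv.Perm (Fin N),
      (fun i j => if j = σ i then (1 : ℝ) / N else 0) ∈
        discreteCouplings (fun _ : Fin N => (1 : ℝ) / N) (fun _ : Fin N => (1 : ℝ) / N) ∧
      JinfD (fun i j => c (x i, y j)) (fun i j => if j = σ i then (1 : ℝ) / N else 0) =
        vInfD (fun i j => c (x i, y j)) (fun _ => (1 : ℝ) / N) (fun _ => (1 : ℝ) / N) := by
  classical
  have hNpos : (0:ℝ) < 1/N := by positivity
  set i0 : Fin N := ⟨0, hN⟩ with hi0
  -- the finite set of cost values
  have hVfin : (Set.range (fun p : Fin N × Fin N => c (x p.1, y p.2))).Finite :=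
    Set.finite_range _
  -- facts about the support-value sets
  have hSsub : ∀ γ : Fin N → Fin N → ℝ,
      {r | ∃ i j, 0 < γ i j ∧ c (x i, y j) = r} ⊆
        Set.range (fun p : Fin N × Fin N => c (x p.1, y p.2)) := by
    rintro γ r ⟨i, j, _, rfl⟩; exact ⟨(i, j), rfl⟩
  have hSbdd : ∀ γ : Fin N → Fin N → ℝ,
      BddAbove {r | ∃ i j, 0 < γ i j ∧ c (x i, y j) = r} :=
    fun γ => (hVfin.subset (hSsub γ)).bddAbove
  have hSne : ∀ γ ∈ discreteCouplings (fun _ : Fin N => (1:ℝ)/N) (fun _ : Fin N => (1:ℝ)/N),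
      {r | ∃ i j, 0 < γ i j ∧ c (x i, y j) = r}.Nonempty := by
    rintro γ ⟨hpos, hrow, -⟩
    have hj : ∃ j, 0 < γ i0 j := by
      by_contra h
      push_neg at h
      have : (∑ j, γ i0 j) = 0 :=
        Finset.sum_eq_zero fun j _ => le_antisymm (h j) (hpos i0 j)
      rw [hrow i0] at this
      exact absurd this (ne_of_gt hNpos)
    obtain ⟨j, hj⟩ := hj
    exact ⟨c (x i0, y j), i0, j, hj, rfl⟩
  -- facts about permutation value sets
  have hPσfacts : ∀ σ : Equiv.Perm (Fin N),
      {s | ∃ i, c (x i, y (σ i)) = s} = Set.range (fun i => c (x i, y (σ i))) := by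
    intro σ; ext s; simp [eq_comm]
  have hPσbdd : ∀ σ : Equiv.Perm (Fin N), BddAbove {s | ∃ i, c (x i, y (σ i)) = s} := by
    intro σ; rw [hPσfacts σ]; exact (Set.finite_range _).bddAbove
  have hPσne : ∀ σ : Equiv.Perm (Fin N), {s | ∃ i, c (x i, y (σ i)) = s}.Nonempty :=
    fun σ => ⟨c (x i0, y (σ i0)), i0, rfl⟩
  -- JinfD of a permutation matrix
  have hJperm : ∀ σ : Equiv.Perm (Fin N),
      JinfD (fun i j => c (x i, y j)) (fun i j => if j = σ i then (1:ℝ)/N else 0)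
        = sSup {s | ∃ i, c (x i, y (σ i)) = s} := by
    intro σ
    unfold JinfD
    congr 1
    ext r
    constructor
    · rintro ⟨i, j, hpos, rfl⟩
      by_cases hj : j = σ i
      · exact ⟨i, by rw [hj]⟩
      · simp only [hj, if_false] at hpos
        exact absurd hpos (lt_irrefl 0)
    · rintro ⟨i, rfl⟩
      exact ⟨i, σ i, by simp only [if_pos rfl]; exact hNpos, rfl⟩
  -- the two sets
  set A : Set ℝ := {r | ∃ γ ∈ discreteCouplings (fun _ : Fin N => (1:ℝ)/N)
      (fun _ : Fin N => (1:ℝ)/N), JinfD (fun i j => c (x i, y j)) γ = r} with hA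
  set P : Set ℝ := {r | ∃ σ : Equiv.Perm (Fin N),
      sSup {s | ∃ i, c (x i, y (σ i)) = s} = r} with hP
  have hPA : P ⊆ A := by
    rintro r ⟨σ, rfl⟩
    exact ⟨_, perm_mem_couplings' hN σ, hJperm σ⟩
  have hPne : P.Nonempty := ⟨_, 1, rfl⟩
  have hAne : A.Nonempty := hPne.mono hPA
  have hPfin : P.Finite := by
    have : P = Set.range (fun σ : Equiv.Perm (Fin N) =>
        sSup {s | ∃ i, c (x i, y (σ i)) = s}) := by
      ext r; simp [hP, Set.mem_range]
    rw [this]; exact Set.finite_range _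
  have hP0 : ∀ r ∈ P, (0:ℝ) ≤ r := by
    rintro r ⟨σ, rfl⟩
    obtain ⟨s, i, rfl⟩ := hPσne σ
    exact le_trans (le_trans (hc0 _) (le_csSup (hPσbdd σ) ⟨i, rfl⟩)) (le_refl _)
  have hA0 : ∀ r ∈ A, (0:ℝ) ≤ r := by
    rintro r ⟨γ, hγ, rfl⟩
    obtain ⟨s, i, j, hij, rfl⟩ := hSne γ hγ
    exact le_trans (hc0 _) (le_csSup (hSbdd γ) ⟨i, j, hij, rfl⟩)
  have hkey : ∀ r ∈ A, ∃ p ∈ P, p ≤ r := by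
    rintro r ⟨γ, hγ, rfl⟩
    obtain ⟨σ, hσ⟩ := exists_perm_pos hN γ hγ
    refine ⟨sSup {s | ∃ i, c (x i, y (σ i)) = s}, ⟨σ, rfl⟩, ?_⟩
    refine csSup_le (hPσne σ) ?_
    rintro s ⟨i, rfl⟩
    exact le_csSup (hSbdd γ) ⟨i, σ i, hσ i, rfl⟩
  have hmain : sInf A = sInf P := by
    refine le_antisymm (csInf_le_csInf ⟨0, hA0⟩ hPne hPA) ?_
    refine le_csInf hAne fun r hr => ?_
    obtain ⟨p, hp, hpr⟩ := hkey r hr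
    exact le_trans (csInf_le ⟨0, hP0⟩ hp) hpr
  have hvinf : vInfD (fun i j => c (x i, y j)) (fun _ => (1 : ℝ) / N)
      (fun _ => (1 : ℝ) / N) = sInf A := rfl
  refine ⟨by rw [hvinf, hmain], ?_⟩
  obtain ⟨σ, hσ⟩ := hPne.csInf_mem hPfin
  exact ⟨σ, perm_mem_couplings' hN σ, by rw [hJperm σ, hσ, hvinf, hmain]⟩
end
end
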